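/- Let G and H be groups acting on U(1) and Z via homomorphisms ρ_G : G → Z₂ and ρ_H : H → Z₂, and give G × H the product action. For x ∈ H^m(G, Z₂) and y ∈ H^n(H, Z₂), the twisted Bockstein operation SQ¹ on G × H satisfies SQ¹(x × y) = SQ¹(x) × y + x × SQ¹(y), where × denotes the cohomology cross product. -/

import Mathlib

/-- Twisted inhomogeneous coboundary operator on integer-valued cochains, for the action of
`K` on `ℤ` by the sign `(-1)^{ρ(g)}`. -/
def dInt {K : Type*} [Group K] (ρ : K → ZMod 2) (n : ℕ) (f : (Fin n → K) → ℤ) :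
    (Fin (n + 1) → K) → ℤ :=
  fun g => (if ρ (g 0) = 1 then -1 else 1) * f (fun i => g i.succ)
    + ∑ j : Fin (n + 1), (-1 : ℤ) ^ ((j : ℕ) + 1) * f (Fin.contractNth j (· * ·) g)

/-- The mod-2 coboundary operator on `Z₂`-valued cochains. -/
def dMod2 {K : Type*} [Group K] (n : ℕ) (f : (Fin n → K) → ZMod 2) :
    (Fin (n + 1) → K) → ZMod 2 :=
  fun g => f (fun i => g i.succ) + ∑ j : Fin (n + 1), f (Fin.contractNth j (· * ·) g)

/-- Cross product of integer-valued cochains: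
`(x × y)((g₁,h₁),…,(g_{m+n},h_{m+n})) = x(g₁,…,g_m)·y(h_{m+1},…,h_{m+n})`. -/
def crossInt {G H : Type*} [Group G] [Group H] {m n : ℕ}
    (a : (Fin m → G) → ℤ) (b : (Fin n → H) → ℤ) : (Fin (m + n) → G × H) → ℤ :=
  fun g => a (fun i => (g (Fin.castAdd n i)).1) * b (fun i => (g (Fin.natAdd m i)).2)

/-- Cross product of `Z₂`-valued cochains. -/
def crossMod2 {G H : Type*} [Group G] [Group H] {m n : ℕ}
    (a : (Fin m → G) → ZMod 2) (b : (Fin n → H) → ZMod 2) :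
    (Fin (m + n) → G × H) → ZMod 2 :=
  fun g => a (fun i => (g (Fin.castAdd n i)).1) * b (fun i => (g (Fin.natAdd m i)).2)

section aux
variable {G H : Type*} [Group G] [Group H] {m n : ℕ}

private lemma argFront_lt (g : Fin (m+n+1) → G × H) (J : Fin (m+n+1)) (j' : Fin (m+1))
    (hJ : (J:ℕ) = (j':ℕ)) :
    (fun i : Fin m => (Fin.contractNth J (· * ·) g (Fin.castAdd n i)).1)
      = Fin.contractNth j' (· * ·) (fun i : Fin (m+1) => (g ⟨(i:ℕ), by omega⟩).1) := by
  funext i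
  rcases lt_trichotomy (i:ℕ) (j':ℕ) with h | h | h
  · rw [Fin.contractNth_apply_of_lt _ _ _ _ (by simp only [Fin.coe_castAdd, hJ]; omega),
      Fin.contractNth_apply_of_lt _ _ _ _ h]; rfl
  · rw [Fin.contractNth_apply_of_eq _ _ _ _ (by simp only [Fin.coe_castAdd, hJ]; omega),
      Fin.contractNth_apply_of_eq _ _ _ _ h, Prod.fst_mul]; rfl
  · rw [Fin.contractNth_apply_of_gt _ _ _ _ (by simp only [Fin.coe_castAdd, hJ]; omega),
      Fin.contractNth_apply_of_gt _ _ _ _ h]; rfl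

private lemma argBack_lt (g : Fin (m+n+1) → G × H) (J : Fin (m+n+1)) (hJ : (J:ℕ) < m) :
    (fun i : Fin n => (Fin.contractNth J (· * ·) g (Fin.natAdd m i)).2)
      = fun i : Fin n => (g ⟨m+(i:ℕ)+1, by omega⟩).2 := by
  funext i
  rw [Fin.contractNth_apply_of_gt _ _ _ _ (by simp only [Fin.coe_natAdd]; omega)]; rfl

private lemma argFront_ge (g : Fin (m+n+1) → G × H) (J : Fin (m+n+1)) (hJ : m ≤ (J:ℕ)) :
    (fun i : Fin m => (Fin.contractNth J (· * ·) g (Fin.castAdd n i)).1)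
      = fun i : Fin m => (g ⟨(i:ℕ), by omega⟩).1 := by
  funext i
  rw [Fin.contractNth_apply_of_lt _ _ _ _ (by simp only [Fin.coe_castAdd]; omega)]; rfl

private lemma argBack_ge (g : Fin (m+n+1) → G × H) (J : Fin (m+n+1)) (k : Fin (n+1))
    (hJ : (J:ℕ) = m + (k:ℕ)) :
    (fun i : Fin n => (Fin.contractNth J (· * ·) g (Fin.natAdd m i)).2)
      = Fin.contractNth k (· * ·) (fun i : Fin (n+1) => (g ⟨m+(i:ℕ), by omega⟩).2) := by
  funext i
  rcases lt_trichotomy (i:ℕ) (k:ℕ) with h | h | h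
  · rw [Fin.contractNth_apply_of_lt _ _ _ _ (by simp only [Fin.coe_natAdd, hJ]; omega),
      Fin.contractNth_apply_of_lt _ _ _ _ h]; rfl
  · rw [Fin.contractNth_apply_of_eq _ _ _ _ (by simp only [Fin.coe_natAdd, hJ]; omega),
      Fin.contractNth_apply_of_eq _ _ _ _ h, Prod.snd_mul]; rfl
  · rw [Fin.contractNth_apply_of_gt _ _ _ _ (by simp only [Fin.coe_natAdd, hJ]; omega),
      Fin.contractNth_apply_of_gt _ _ _ _ h]; rfl

private lemma epsSplit : ∀ a b : ZMod 2,
    (if a + b = 1 then (-1:ℤ) else 1) = (if a = 1 then -1 else 1) * (if b = 1 then -1 else 1) := by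
  decide

private lemma epsDelta : ∀ b : ZMod 2,
    (if b = 1 then (-1:ℤ) else 1) = 1 + 2 * (if b = 1 then -1 else 0) := by decide


variable (hmn : m + (n+1) = m + n + 1)

set_option maxHeartbeats 1000000 in
private lemma A1lem (xt : (Fin m → G) → ℤ) (yt : (Fin n → H) → ℤ) (g : Fin (m+n+1) → G × H) :
    (∑ i : Fin m,
      (-1:ℤ) ^ ((((finCongr hmn) (Fin.castAdd (n + 1) i) : Fin (m+n+1)) : ℕ) + 1) *
        ((xt fun i_1 =>
            (((finCongr hmn) (Fin.castAdd (n + 1) i)).contractNth (fun x1 x2 => x1 * x2) g (Fin.castAdd n i_1)).1) *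
          yt fun i_1 =>
            (((finCongr hmn) (Fin.castAdd (n + 1) i)).contractNth (fun x1 x2 => x1 * x2) g (Fin.natAdd m i_1)).2))
      = (∑ j : Fin m, (-1:ℤ) ^ ((j:ℕ) + 1) *
          xt (Fin.contractNth j.castSucc (· * ·) (fun i : Fin (m+1) => (g ⟨(i:ℕ), by omega⟩).1)))
        * yt (fun i : Fin n => (g ⟨m+(i:ℕ)+1, by omega⟩).2) := by
  have hc1 : ∀ i : Fin m, (((finCongr hmn) (Fin.castAdd (n + 1) i) : Fin (m+n+1)) : ℕ) = (i:ℕ) :=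
    fun i => rfl
  rw [Finset.sum_mul]
  refine Finset.sum_congr rfl fun i _ => ?_
  rw [argFront_lt g ((finCongr hmn) (Fin.castAdd (n + 1) i)) i.castSucc
      (by rw [hc1]; simp),
    argBack_lt g ((finCongr hmn) (Fin.castAdd (n + 1) i)) (by rw [hc1]; omega)]
  rw [hc1]
  ring

set_option maxHeartbeats 1000000 in
private lemma A2lem (xt : (Fin m → G) → ℤ) (yt : (Fin n → H) → ℤ) (g : Fin (m+n+1) → G × H) :
    (∑ i : Fin (n + 1),
      (-1:ℤ) ^ ((((finCongr hmn) (Fin.natAdd m i) : Fin (m+n+1)) : ℕ) + 1) *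
        ((xt fun i_1 =>
            (((finCongr hmn) (Fin.natAdd m i)).contractNth (fun x1 x2 => x1 * x2) g (Fin.castAdd n i_1)).1) *
          yt fun i_1 =>
            (((finCongr hmn) (Fin.natAdd m i)).contractNth (fun x1 x2 => x1 * x2) g (Fin.natAdd m i_1)).2))
      = (-1:ℤ)^m * ((xt fun i : Fin m => (g ⟨(i:ℕ), by omega⟩).1) *
          ∑ k : Fin (n+1), (-1:ℤ) ^ ((k:ℕ) + 1) *
            yt (Fin.contractNth k (· * ·) (fun i : Fin (n+1) => (g ⟨m+(i:ℕ), by omega⟩).2))) := by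
  have hc2 : ∀ k : Fin (n+1), (((finCongr hmn) (Fin.natAdd m k) : Fin (m+n+1)) : ℕ) = m + (k:ℕ) :=
    fun k => rfl
  rw [Finset.mul_sum, Finset.mul_sum]
  refine Finset.sum_congr rfl fun k _ => ?_
  rw [argFront_ge g ((finCongr hmn) (Fin.natAdd m k)) (by rw [hc2]; omega),
    argBack_ge g ((finCongr hmn) (Fin.natAdd m k)) k (hc2 k)]
  rw [hc2]
  ring

set_option maxHeartbeats 1000000 in
private lemma C1lem (xt : (Fin m → G) → ℤ) (g : Fin (m+n+1) → G × H) :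
    (∑ j : Fin (m + 1), (-1:ℤ) ^ ((j:ℕ) + 1) *
        xt (Fin.contractNth j (fun x1 x2 => x1 * x2) fun i : Fin (m+1) => (g ⟨(i:ℕ), by omega⟩).1))
      = (∑ j : Fin m, (-1:ℤ) ^ ((j:ℕ) + 1) *
          xt (Fin.contractNth j.castSucc (· * ·) (fun i : Fin (m+1) => (g ⟨(i:ℕ), by omega⟩).1)))
        + (-1:ℤ)^(m+1) * xt (fun i : Fin m => (g ⟨(i:ℕ), by omega⟩).1) := by
  rw [Fin.sum_univ_castSucc (f := fun j : Fin (m+1) => (-1:ℤ) ^ ((j:ℕ) + 1) *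
      xt (Fin.contractNth j (fun x1 x2 => x1 * x2) fun i : Fin (m+1) => (g ⟨(i:ℕ), by omega⟩).1))]
  congr 1
  have hlast : Fin.contractNth (Fin.last m) (· * ·)
      (fun i : Fin (m+1) => (g ⟨(i:ℕ), by omega⟩).1)
      = fun i : Fin m => (g ⟨(i:ℕ), by omega⟩).1 := by
    funext i
    rw [Fin.contractNth_apply_of_lt _ _ _ _ (by simp only [Fin.val_last]; omega)]; rfl
  rw [hlast, Fin.val_last]

set_option maxHeartbeats 2000000 in
lemma keyId (ρG : G → ZMod 2) (ρH : H → ZMod 2)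
    (xt : (Fin m → G) → ℤ) (yt : (Fin n → H) → ℤ) (g : Fin (m+n+1) → G × H) :
    dInt (fun p : G × H => ρG p.1 + ρH p.2) (m + n) (crossInt xt yt) g
      = dInt ρG m xt (fun i : Fin (m+1) => (g ⟨(i:ℕ), by omega⟩).1)
          * yt (fun i : Fin n => (g ⟨m+(i:ℕ)+1, by omega⟩).2)
        + (-1:ℤ)^m * (xt (fun i : Fin m => (g ⟨(i:ℕ), by omega⟩).1)
          * dInt ρH n yt (fun i : Fin (n+1) => (g ⟨m+(i:ℕ), by omega⟩).2))
        + 2 * ((if ρG (g 0).1 = 1 then (-1:ℤ) else 1) * (if ρH (g 0).2 = 1 then (-1:ℤ) else 0)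
            * (xt (fun i : Fin m => (g ⟨(i:ℕ)+1, by omega⟩).1)
              * yt (fun i : Fin n => (g ⟨m+(i:ℕ)+1, by omega⟩).2))
          + (-1:ℤ)^(m+1) * (if ρH (g ⟨m, by omega⟩).2 = 1 then (-1:ℤ) else 0)
            * (xt (fun i : Fin m => (g ⟨(i:ℕ), by omega⟩).1)
              * yt (fun i : Fin n => (g ⟨m+(i:ℕ)+1, by omega⟩).2))) := by
  have hmn : m + (n+1) = m+n+1 := by omega
  simp only [dInt, crossInt]
  rw [← Equiv.sum_comp (finCongr hmn)
    (fun x : Fin (m+n+1) => (-1:ℤ) ^ ((x:ℕ) + 1) *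
      ((xt fun i => (Fin.contractNth x (· * ·) g (Fin.castAdd n i)).1) *
        yt fun i => (Fin.contractNth x (· * ·) g (Fin.natAdd m i)).2))]
  rw [Fin.sum_univ_add, A1lem hmn xt yt g, A2lem hmn xt yt g]
  have eSF : (fun i : Fin m => (g (Fin.castAdd n i).succ).1)
      = (fun i : Fin m => (g ⟨(i:ℕ)+1, by omega⟩).1) := rfl
  have eSB : (fun i : Fin n => (g (Fin.natAdd m i).succ).2)
      = (fun i : Fin n => (g ⟨m+(i:ℕ)+1, by omega⟩).2) := rfl
  rw [eSF, eSB]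
  have eSF2 : (fun i : Fin m => (g ⟨((i.succ : Fin (m+1)):ℕ), by omega⟩).1)
      = (fun i : Fin m => (g ⟨(i:ℕ)+1, by omega⟩).1) := rfl
  have eSB2 : (fun i : Fin n => (g ⟨m + ((i.succ : Fin (n+1)):ℕ), by omega⟩).2)
      = (fun i : Fin n => (g ⟨m+(i:ℕ)+1, by omega⟩).2) := rfl
  rw [eSF2, eSB2]
  have e0 : (⟨((0 : Fin (m+1)):ℕ), by omega⟩ : Fin (m+n+1)) = 0 := by ext; simp
  have e0' : (⟨m + ((0 : Fin (n+1)):ℕ), by omega⟩ : Fin (m+n+1)) = ⟨m, by omega⟩ := by ext; simp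
  simp only [Fin.val_zero, Fin.mk_zero, add_zero]
  rw [C1lem xt g]
  rw [epsSplit (ρG (g 0).1) (ρH (g 0).2)]
  simp only [epsDelta]
  split_ifs with h1 h2 h2 <;> simp only [h1, ↓reduceIte] <;> ring

private lemma castNeg1pow (k : ℕ) : (((-1:ℤ)^k : ℤ) : ZMod 2) = 1 := by
  push_cast
  rw [show ((-1 : ZMod 2)) = 1 from by decide, one_pow]

private lemma cast_dInt {K : Type*} [Group K] (ρ : K → ZMod 2) (N : ℕ)
    (f : (Fin N → K) → ℤ) (gg : Fin (N+1) → K) :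
    ((dInt ρ N f gg : ℤ) : ZMod 2) = dMod2 N (fun t => ((f t : ℤ) : ZMod 2)) gg := by
  simp only [dInt, dMod2]
  push_cast
  have h1 : ((-1 : ZMod 2)) = 1 := by decide
  simp only [apply_ite (fun z : ℤ => (z : ZMod 2)), Int.cast_neg, Int.cast_one, h1, ite_self,
    one_mul, one_pow]

private lemma dvd_dInt {K : Type*} [Group K] (ρ : K → ZMod 2) (N : ℕ)
    (f : (Fin N → K) → ℤ) (hf : dMod2 N (fun t => ((f t : ℤ) : ZMod 2)) = 0)
    (gg : Fin (N+1) → K) : (2:ℤ) ∣ dInt ρ N f gg := by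
  have h := (ZMod.intCast_zmod_eq_zero_iff_dvd (dInt ρ N f gg) 2).mp
  have h2 : ((dInt ρ N f gg : ℤ) : ZMod 2) = 0 := by
    rw [cast_dInt, hf]; rfl
  exact_mod_cast h h2

private lemma contract_sum {M : Type*} [AddCommMonoid M] {N : ℕ} (j : Fin (N+1)) (hj : (j:ℕ) < N)
    (u : Fin (N+1) → M) :
    ∑ i : Fin N, Fin.contractNth j (· + ·) u i = ∑ i : Fin (N+1), u i := by
  induction N with
  | zero => omega
  | succ N ih =>
    rcases Fin.eq_zero_or_eq_succ j with h0 | ⟨j', rfl⟩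
    · subst h0
      rw [Fin.sum_univ_succ (f := fun i => Fin.contractNth 0 (· + ·) u i),
        Fin.sum_univ_succ (f := u), Fin.sum_univ_succ (f := fun i => u i.succ)]
      rw [Fin.contractNth_apply_of_eq 0 _ u 0 (by simp)]
      have h2 : ∀ i : Fin N, Fin.contractNth 0 (· + ·) u i.succ = u i.succ.succ := fun i =>
        Fin.contractNth_apply_of_gt 0 _ u i.succ (by simp)
      simp only [h2]
      simp [add_assoc]
    · rw [Fin.sum_univ_succ (f := fun i => Fin.contractNth j'.succ (· + ·) u i),
        Fin.sum_univ_succ (f := u)]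
      rw [Fin.contractNth_apply_of_lt j'.succ _ u 0 (by simp)]
      have key : ∀ i : Fin N, Fin.contractNth j'.succ (· + ·) u i.succ
          = Fin.contractNth j' (· + ·) (fun i => u i.succ) i := by
        intro i
        rcases lt_trichotomy (i:ℕ) (j':ℕ) with h | h | h
        · rw [Fin.contractNth_apply_of_lt j'.succ _ u i.succ (by simp [h]),
            Fin.contractNth_apply_of_lt j' _ _ i h]
          congr 1
        · rw [Fin.contractNth_apply_of_eq j'.succ _ u i.succ (by simp [h]),
            Fin.contractNth_apply_of_eq j' _ _ i h]
          congr 2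
        · rw [Fin.contractNth_apply_of_gt j'.succ _ u i.succ (by simp [h]),
            Fin.contractNth_apply_of_gt j' _ _ i h]
      simp only [key]
      rw [ih j' (by simpa using hj)]
      simp [Fin.castSucc_zero]

private lemma RCfront (ρH : H → ZMod 2) (hρH : ∀ a b : H, ρH (a * b) = ρH a + ρH b)
    (g : Fin (m+n+1) → G × H) (J : Fin (m+n+1)) (hJ : (J:ℕ) < m) :
    (∑ i : Fin m, ρH ((Fin.contractNth J (· * ·) g (Fin.castAdd n i)).2))
      = ∑ i : Fin (m+1), ρH ((g ⟨(i:ℕ), by omega⟩).2) := by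
  have e : (fun i : Fin m => ρH ((Fin.contractNth J (· * ·) g (Fin.castAdd n i)).2))
      = Fin.contractNth ⟨(J:ℕ), by omega⟩ (· + ·)
          (fun i : Fin (m+1) => ρH ((g ⟨(i:ℕ), by omega⟩).2)) := by
    funext i
    rcases lt_trichotomy (i:ℕ) (J:ℕ) with h | h | h
    · rw [Fin.contractNth_apply_of_lt _ _ _ _ (by simp only [Fin.coe_castAdd]; omega),
        Fin.contractNth_apply_of_lt (⟨(J:ℕ), by omega⟩ : Fin (m+1)) _ _ _ h]; rfl
    · rw [Fin.contractNth_apply_of_eq _ _ _ _ (by simp only [Fin.coe_castAdd]; omega),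
        Fin.contractNth_apply_of_eq (⟨(J:ℕ), by omega⟩ : Fin (m+1)) _ _ _ h, Prod.snd_mul,
        hρH]; rfl
    · rw [Fin.contractNth_apply_of_gt _ _ _ _ (by simp only [Fin.coe_castAdd]; omega),
        Fin.contractNth_apply_of_gt (⟨(J:ℕ), by omega⟩ : Fin (m+1)) _ _ _ h]; rfl
  rw [e, contract_sum (⟨(J:ℕ), by omega⟩ : Fin (m+1)) hJ]

private lemma RCback (ρH : H → ZMod 2) (g : Fin (m+n+1) → G × H)
    (J : Fin (m+n+1)) (hJ : m ≤ (J:ℕ)) :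
    (∑ i : Fin m, ρH ((Fin.contractNth J (· * ·) g (Fin.castAdd n i)).2))
      = ∑ i : Fin m, ρH ((g ⟨(i:ℕ), by omega⟩).2) := by
  refine Finset.sum_congr rfl fun i _ => ?_
  rw [Fin.contractNth_apply_of_lt _ _ _ _ (by simp only [Fin.coe_castAdd]; omega)]; rfl

set_option maxHeartbeats 1000000 in
private lemma M1lem (ρH : H → ZMod 2) (hρH : ∀ a b : H, ρH (a * b) = ρH a + ρH b)
    (hmn : m + (n+1) = m + n + 1)
    (xt : (Fin m → G) → ℤ) (yt : (Fin n → H) → ℤ) (g : Fin (m+n+1) → G × H) :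
    (∑ i : Fin m,
      (∑ i_1 : Fin m,
        ρH (((finCongr hmn) (Fin.castAdd (n + 1) i)).contractNth (fun x1 x2 => x1 * x2) g
            (Fin.castAdd n i_1)).2) *
        (((xt fun i_1 =>
            (((finCongr hmn) (Fin.castAdd (n + 1) i)).contractNth (fun x1 x2 => x1 * x2) g
              (Fin.castAdd n i_1)).1) : ℤ) : ZMod 2) *
        (((yt fun i_1 =>
            (((finCongr hmn) (Fin.castAdd (n + 1) i)).contractNth (fun x1 x2 => x1 * x2) g
              (Fin.natAdd m i_1)).2) : ℤ) : ZMod 2))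
      = (∑ i : Fin (m+1), ρH ((g ⟨(i:ℕ), by omega⟩).2)) *
          ((∑ j : Fin m, (((xt (Fin.contractNth j.castSucc (· * ·)
              (fun i : Fin (m+1) => (g ⟨(i:ℕ), by omega⟩).1))) : ℤ) : ZMod 2)) *
            (((yt fun i : Fin n => (g ⟨m+(i:ℕ)+1, by omega⟩).2) : ℤ) : ZMod 2)) := by
  rw [Finset.sum_mul (s := Finset.univ)
      (f := fun j : Fin m => (((xt (Fin.contractNth j.castSucc (· * ·)
        (fun i : Fin (m+1) => (g ⟨(i:ℕ), by omega⟩).1))) : ℤ) : ZMod 2)),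
    Finset.mul_sum]
  refine Finset.sum_congr rfl fun i _ => ?_
  have hc1 : (((finCongr hmn) (Fin.castAdd (n + 1) i) : Fin (m+n+1)) : ℕ) = (i:ℕ) := rfl
  rw [argFront_lt g ((finCongr hmn) (Fin.castAdd (n + 1) i)) i.castSucc (by rw [hc1]; simp),
    argBack_lt g ((finCongr hmn) (Fin.castAdd (n + 1) i)) (by rw [hc1]; omega),
    RCfront ρH hρH g ((finCongr hmn) (Fin.castAdd (n + 1) i)) (by rw [hc1]; omega)]
  ring

set_option maxHeartbeats 1000000 in
private lemma M2lem (ρH : H → ZMod 2) (hmn : m + (n+1) = m + n + 1)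
    (xt : (Fin m → G) → ℤ) (yt : (Fin n → H) → ℤ) (g : Fin (m+n+1) → G × H) :
    (∑ i : Fin (n + 1),
      (∑ i_1 : Fin m,
        ρH (((finCongr hmn) (Fin.natAdd m i)).contractNth (fun x1 x2 => x1 * x2) g
            (Fin.castAdd n i_1)).2) *
        (((xt fun i_1 =>
            (((finCongr hmn) (Fin.natAdd m i)).contractNth (fun x1 x2 => x1 * x2) g
              (Fin.castAdd n i_1)).1) : ℤ) : ZMod 2) *
        (((yt fun i_1 =>
            (((finCongr hmn) (Fin.natAdd m i)).contractNth (fun x1 x2 => x1 * x2) g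
              (Fin.natAdd m i_1)).2) : ℤ) : ZMod 2))
      = (∑ i : Fin m, ρH ((g ⟨(i:ℕ), by omega⟩).2)) *
          ((((xt fun i : Fin m => (g ⟨(i:ℕ), by omega⟩).1) : ℤ) : ZMod 2) *
            ∑ k : Fin (n+1), (((yt (Fin.contractNth k (· * ·)
              (fun i : Fin (n+1) => (g ⟨m+(i:ℕ), by omega⟩).2))) : ℤ) : ZMod 2)) := by
  rw [Finset.mul_sum, Finset.mul_sum]
  refine Finset.sum_congr rfl fun k _ => ?_
  have hc2 : (((finCongr hmn) (Fin.natAdd m k) : Fin (m+n+1)) : ℕ) = m + (k:ℕ) := rfl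
  rw [argFront_ge g ((finCongr hmn) (Fin.natAdd m k)) (by rw [hc2]; omega),
    argBack_ge g ((finCongr hmn) (Fin.natAdd m k)) k hc2,
    RCback ρH g ((finCongr hmn) (Fin.natAdd m k)) (by rw [hc2]; omega)]
  ring

private lemma contract_last' (g : Fin (m+n+1) → G × H) :
    Fin.contractNth (Fin.last m) (· * ·) (fun i : Fin (m+1) => (g ⟨(i:ℕ), by omega⟩).1)
      = fun i : Fin m => (g ⟨(i:ℕ), by omega⟩).1 := by
  funext i
  rw [Fin.contractNth_apply_of_lt _ _ _ _ (by simp only [Fin.val_last]; omega)]; rfl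

set_option maxHeartbeats 1000000 in
private lemma muLem (ρH : H → ZMod 2) (hρH : ∀ a b : H, ρH (a * b) = ρH a + ρH b)
    (xt : (Fin m → G) → ℤ) (yt : (Fin n → H) → ℤ)
    (hx : dMod2 m (fun t => ((xt t : ℤ) : ZMod 2)) = 0)
    (hy : dMod2 n (fun t => ((yt t : ℤ) : ZMod 2)) = 0)
    (g : Fin (m+n+1) → G × H) :
    dMod2 (m+n) (fun g' : Fin (m+n) → G × H =>
      (∑ i : Fin m, ρH ((g' (Fin.castAdd n i)).2)) *
        (((xt fun i => (g' (Fin.castAdd n i)).1) : ℤ) : ZMod 2) *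
        (((yt fun i => (g' (Fin.natAdd m i)).2) : ℤ) : ZMod 2)) g
      = ρH (g 0).2 * ((((xt fun i : Fin m => (g ⟨(i:ℕ)+1, by omega⟩).1) : ℤ) : ZMod 2)
          * (((yt fun i : Fin n => (g ⟨m+(i:ℕ)+1, by omega⟩).2) : ℤ) : ZMod 2))
        + ρH (g (⟨m, by omega⟩ : Fin (m+n+1))).2
          * ((((xt fun i : Fin m => (g ⟨(i:ℕ), by omega⟩).1) : ℤ) : ZMod 2)
          * (((yt fun i : Fin n => (g ⟨m+(i:ℕ)+1, by omega⟩).2) : ℤ) : ZMod 2)) := by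
  have hmn : m + (n+1) = m+n+1 := by omega
  simp only [dMod2]
  rw [← Equiv.sum_comp (finCongr hmn)
    (fun x : Fin (m+n+1) =>
      (∑ i : Fin m, ρH ((Fin.contractNth x (· * ·) g (Fin.castAdd n i)).2)) *
        (((xt fun i => (Fin.contractNth x (· * ·) g (Fin.castAdd n i)).1) : ℤ) : ZMod 2) *
        (((yt fun i => (Fin.contractNth x (· * ·) g (Fin.natAdd m i)).2) : ℤ) : ZMod 2))]
  rw [Fin.sum_univ_add, M1lem ρH hρH hmn xt yt g, M2lem ρH hmn xt yt g]
  -- normalize shift atoms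
  have eR : (∑ x : Fin m, ρH (g (Fin.castAdd n x).succ).2)
      = ∑ x : Fin m, ρH ((g ⟨(x:ℕ)+1, by omega⟩).2) := Finset.sum_congr rfl fun x _ => rfl
  have eSF : (fun i : Fin m => (g (Fin.castAdd n i).succ).1)
      = (fun i : Fin m => (g ⟨(i:ℕ)+1, by omega⟩).1) := rfl
  have eSB : (fun i : Fin n => (g (Fin.natAdd m i).succ).2)
      = (fun i : Fin n => (g ⟨m+(i:ℕ)+1, by omega⟩).2) := rfl
  rw [eR, eSF, eSB]
  -- cocycle equations
  have h1 := congrFun hx (fun i : Fin (m+1) => (g ⟨(i:ℕ), by omega⟩).1)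
  simp only [dMod2, Pi.zero_apply] at h1
  rw [Fin.sum_univ_castSucc (f := fun j : Fin (m+1) =>
      (((xt (Fin.contractNth j (fun x1 x2 => x1 * x2)
        (fun i : Fin (m+1) => (g ⟨(i:ℕ), by omega⟩).1))) : ℤ) : ZMod 2)),
    contract_last' g] at h1
  have eSF2 : (fun i : Fin m => (g ⟨((i.succ : Fin (m+1)):ℕ), by omega⟩).1)
      = (fun i : Fin m => (g ⟨(i:ℕ)+1, by omega⟩).1) := rfl
  rw [eSF2] at h1
  have h2 := congrFun hy (fun i : Fin (n+1) => (g ⟨m+(i:ℕ), by omega⟩).2)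
  simp only [dMod2, Pi.zero_apply] at h2
  have eSB2 : (fun i : Fin n => (g ⟨m + ((i.succ : Fin (n+1)):ℕ), by omega⟩).2)
      = (fun i : Fin n => (g ⟨m+(i:ℕ)+1, by omega⟩).2) := rfl
  rw [eSB2] at h2
  -- R relations
  have hRall : (∑ i : Fin (m+1), ρH ((g ⟨(i:ℕ), by omega⟩).2))
      = ρH (g 0).2 + ∑ x : Fin m, ρH ((g ⟨(x:ℕ)+1, by omega⟩).2) := by
    rw [Fin.sum_univ_succ (f := fun i : Fin (m+1) => ρH ((g ⟨(i:ℕ), by omega⟩).2))]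
    congr 1
  have hRfront : (∑ i : Fin (m+1), ρH ((g ⟨(i:ℕ), by omega⟩).2))
      = (∑ i : Fin m, ρH ((g ⟨(i:ℕ), by omega⟩).2))
        + ρH (g (⟨m, by omega⟩ : Fin (m+n+1))).2 := by
    rw [Fin.sum_univ_castSucc (f := fun i : Fin (m+1) => ρH ((g ⟨(i:ℕ), by omega⟩).2))]
    congr 1
  have two_eq_zero : (2 : ZMod 2) = 0 := rfl
  linear_combination
    ((∑ i : Fin (m+1), ρH ((g ⟨(i:ℕ), by omega⟩).2))
        * (((yt fun i : Fin n => (g ⟨m+(i:ℕ)+1, by omega⟩).2) : ℤ) : ZMod 2)) * h1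
    + ((∑ i : Fin m, ρH ((g ⟨(i:ℕ), by omega⟩).2))
        * (((xt fun i : Fin m => (g ⟨(i:ℕ), by omega⟩).1) : ℤ) : ZMod 2)) * h2
    + (-((((xt fun i : Fin m => (g ⟨(i:ℕ)+1, by omega⟩).1) : ℤ) : ZMod 2)
        * (((yt fun i : Fin n => (g ⟨m+(i:ℕ)+1, by omega⟩).2) : ℤ) : ZMod 2))) * hRall
    + (-((((xt fun i : Fin m => (g ⟨(i:ℕ), by omega⟩).1) : ℤ) : ZMod 2)
        * (((yt fun i : Fin n => (g ⟨m+(i:ℕ)+1, by omega⟩).2) : ℤ) : ZMod 2))) * hRfront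
    + (-(ρH (g 0).2 * ((((xt fun i : Fin m => (g ⟨(i:ℕ)+1, by omega⟩).1) : ℤ) : ZMod 2)
            * (((yt fun i : Fin n => (g ⟨m+(i:ℕ)+1, by omega⟩).2) : ℤ) : ZMod 2))
        + ρH (g (⟨m, by omega⟩ : Fin (m+n+1))).2
            * ((((xt fun i : Fin m => (g ⟨(i:ℕ), by omega⟩).1) : ℤ) : ZMod 2)
            * (((yt fun i : Fin n => (g ⟨m+(i:ℕ)+1, by omega⟩).2) : ℤ) : ZMod 2))
        + (∑ i : Fin m, ρH ((g ⟨(i:ℕ), by omega⟩).2))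
            * ((((xt fun i : Fin m => (g ⟨(i:ℕ), by omega⟩).1) : ℤ) : ZMod 2)
            * (((yt fun i : Fin n => (g ⟨m+(i:ℕ)+1, by omega⟩).2) : ℤ) : ZMod 2))))
      * two_eq_zero

end aux

set_option maxHeartbeats 1000000 in
/-- let `ρ_G : G → Z₂`, `ρ_H : H → Z₂` twist the actions on `U(1)` and `ℤ`,
and give `G × H` the product twist `ρ(g,h) = ρ_G(g) + ρ_H(h)`.  For a `Z₂`-cocycle
`x ∈ Hᵐ(G, Z₂)` with integer lift `x̃` and a `Z₂`-cocycle `y ∈ Hⁿ(H, Z₂)` with integer lift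
`ỹ`, the twisted Bockstein `SQ¹(z) = (1/2)·(twisted differential of a lift of z) mod 2`
satisfies `SQ¹(x × y) = SQ¹(x) × y + x × SQ¹(y)` as classes in `H^{m+n+1}(G × H, Z₂)`,
i.e. the representative of `SQ¹(x × y)` (computed from the lift `x̃ × ỹ`) differs from
`SQ¹(x) × y + x × SQ¹(y)` by a coboundary. -/
theorem SQ1_cross_product {G H : Type*} [Group G] [Group H]
    (ρG : G → ZMod 2) (ρH : H → ZMod 2)
    (hρG : ∀ a b : G, ρG (a * b) = ρG a + ρG b)
    (hρH : ∀ a b : H, ρH (a * b) = ρH a + ρH b)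
    (m n : ℕ) (xt : (Fin m → G) → ℤ) (yt : (Fin n → H) → ℤ)
    (hx : dMod2 m (fun g => ((xt g : ℤ) : ZMod 2)) = 0)
    (hy : dMod2 n (fun h => ((yt h : ℤ) : ZMod 2)) = 0) :
    (∀ g, (2 : ℤ) ∣ dInt ρG m xt g) ∧
    (∀ h, (2 : ℤ) ∣ dInt ρH n yt h) ∧
    (∀ g, (2 : ℤ) ∣ dInt (fun p : G × H => ρG p.1 + ρH p.2) (m + n) (crossInt xt yt) g) ∧
    ∃ μ : (Fin (m + n) → G × H) → ZMod 2,
      (fun g : Fin (m + n + 1) → G × H =>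
          ((dInt (fun p : G × H => ρG p.1 + ρH p.2) (m + n) (crossInt xt yt) g / 2 : ℤ) :
            ZMod 2))
        = (fun g : Fin (m + n + 1) → G × H =>
            crossMod2 (fun h => ((dInt ρG m xt h / 2 : ℤ) : ZMod 2))
              (fun h => ((yt h : ℤ) : ZMod 2))
              (fun j => g (Fin.cast (by omega : m + 1 + n = m + n + 1) j)))
          + (fun g : Fin (m + n + 1) → G × H =>
            crossMod2 (fun h => ((xt h : ℤ) : ZMod 2))
              (fun h => ((dInt ρH n yt h / 2 : ℤ) : ZMod 2))
              (fun j => g (Fin.cast (by omega : m + (n + 1) = m + n + 1) j)))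
          + dMod2 (m + n) μ := by
  have part1 : ∀ gg, (2:ℤ) ∣ dInt ρG m xt gg := fun gg => dvd_dInt ρG m xt hx gg
  have part2 : ∀ hh, (2:ℤ) ∣ dInt ρH n yt hh := fun hh => dvd_dInt ρH n yt hy hh
  have part3 : ∀ g, (2:ℤ) ∣ dInt (fun p : G × H => ρG p.1 + ρH p.2) (m + n)
      (crossInt xt yt) g := by
    intro g
    rw [keyId ρG ρH xt yt g]
    have d1 := (part1 (fun i : Fin (m+1) => (g ⟨(i:ℕ), by omega⟩).1)).mul_right
      (yt fun i : Fin n => (g ⟨m+(i:ℕ)+1, by omega⟩).2)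
    have d2 := ((part2 (fun i : Fin (n+1) => (g ⟨m+(i:ℕ), by omega⟩).2)).mul_left
      (xt fun i : Fin m => (g ⟨(i:ℕ), by omega⟩).1)).mul_left ((-1:ℤ)^m)
    exact dvd_add (dvd_add d1 d2) ⟨_, rfl⟩
  refine ⟨part1, part2, part3, ?_⟩
  refine ⟨fun g' => (∑ i : Fin m, ρH ((g' (Fin.castAdd n i)).2)) *
        (((xt fun i => (g' (Fin.castAdd n i)).1) : ℤ) : ZMod 2) *
        (((yt fun i => (g' (Fin.natAdd m i)).2) : ℤ) : ZMod 2), ?_⟩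
  funext g
  simp only [Pi.add_apply, crossMod2]
  have c1 : (fun i : Fin (m+1) => (g (Fin.cast (by omega : m+1+n = m+n+1) (Fin.castAdd n i))).1)
      = (fun i : Fin (m+1) => (g ⟨(i:ℕ), by omega⟩).1) := rfl
  have c2 : (fun i : Fin n => (g (Fin.cast (by omega : m+1+n = m+n+1) (Fin.natAdd (m+1) i))).2)
      = (fun i : Fin n => (g ⟨m+(i:ℕ)+1, by omega⟩).2) := by
    funext i
    rw [show (Fin.cast (by omega : m+1+n = m+n+1) (Fin.natAdd (m+1) i))
        = (⟨m+(i:ℕ)+1, by omega⟩ : Fin (m+n+1)) from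
      Fin.ext (by simp only [Fin.coe_cast, Fin.coe_natAdd]; omega)]
  have c3 : (fun i : Fin m => (g (Fin.cast (by omega : m+(n+1) = m+n+1) (Fin.castAdd (n+1) i))).1)
      = (fun i : Fin m => (g ⟨(i:ℕ), by omega⟩).1) := rfl
  have c4 : (fun i : Fin (n+1) => (g (Fin.cast (by omega : m+(n+1) = m+n+1) (Fin.natAdd m i))).2)
      = (fun i : Fin (n+1) => (g ⟨m+(i:ℕ), by omega⟩).2) := rfl
  rw [c1, c2, c3, c4, muLem ρH hρH xt yt hx hy g]
  obtain ⟨q1, hq1⟩ := part1 (fun i : Fin (m+1) => (g ⟨(i:ℕ), by omega⟩).1)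
  obtain ⟨q2, hq2⟩ := part2 (fun i : Fin (n+1) => (g ⟨m+(i:ℕ), by omega⟩).2)
  rw [keyId ρG ρH xt yt g, hq1, hq2]
  have hfact : ∀ (a b c d e f : ℤ), (2*a)*b + c*(d*(2*e)) + 2*f = 2*(a*b + c*(d*e) + f) := by
    intros; ring
  rw [hfact]
  rw [Int.mul_ediv_cancel_left _ (by norm_num : (2:ℤ) ≠ 0),
    Int.mul_ediv_cancel_left _ (by norm_num : (2:ℤ) ≠ 0),
    Int.mul_ediv_cancel_left _ (by norm_num : (2:ℤ) ≠ 0)]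
  push_cast
  have h0 : ∀ a : ZMod 2, a ≠ 1 → a = 0 := by decide
  have dG : (if ρG (g 0).1 = 1 then (-1 : ZMod 2) else 1) = 1 := by
    split_ifs <;> decide
  have dH0 : (if ρH (g 0).2 = 1 then (-1 : ZMod 2) else 0) = ρH (g 0).2 := by
    split_ifs with h
    · rw [h]; decide
    · rw [h0 _ h]
  have dHm : (if ρH (g (⟨m, by omega⟩ : Fin (m+n+1))).2 = 1 then (-1 : ZMod 2) else 0)
      = ρH (g (⟨m, by omega⟩ : Fin (m+n+1))).2 := by
    split_ifs with h
    · rw [h]; decide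
    · rw [h0 _ h]
  rw [dG, dH0, dHm, show ((-1 : ZMod 2)) = 1 from by decide]
  simp only [one_pow, one_mul]
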